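/- Let X have the Pareto distribution with parameters α > 0 and δ > 0. Then p_eR(X) = P(X > Q3(X) + 3·IQR(X)) = 3/(4·(4·3^{1/α} − 3)^α). -/

import Mathlib

open MeasureTheory Real

variable {Ω : Type*} [MeasurableSpace Ω]

/-- Generalized inverse of the c.d.f.: `F⁻(p) = inf {x : F(x) ≥ p}`. -/
noncomputable def quantile (μ : Measure Ω) (X : Ω → ℝ) (p : ℝ) : ℝ :=
  sInf {x : ℝ | p ≤ (μ {ω | X ω ≤ x}).toReal}

noncomputable def Q1 (μ : Measure Ω) (X : Ω → ℝ) : ℝ := quantile μ X (1/4)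

noncomputable def Q3 (μ : Measure Ω) (X : Ω → ℝ) : ℝ := quantile μ X (3/4)

noncomputable def IQR (μ : Measure Ω) (X : Ω → ℝ) : ℝ := Q3 μ X - Q1 μ X

/-- Probability of a left extreme outlier. -/
noncomputable def peL (μ : Measure Ω) (X : Ω → ℝ) : ℝ :=
  (μ {ω | X ω < Q1 μ X - 3 * IQR μ X}).toReal

/-- Probability of a right extreme outlier. -/
noncomputable def peR (μ : Measure Ω) (X : Ω → ℝ) : ℝ :=
  (μ {ω | Q3 μ X + 3 * IQR μ X < X ω}).toReal

noncomputable def pe2 (μ : Measure Ω) (X : Ω → ℝ) : ℝ := peL μ X + peR μ X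
lemma pareto_cdf (μ : Measure Ω) [IsProbabilityMeasure μ]
    (X : Ω → ℝ) (hX : Measurable X) (α δ : ℝ)
    (htail : ∀ x : ℝ, δ ≤ x → (μ {ω | x < X ω}).toReal = (δ / x) ^ α)
    (x : ℝ) (hx : δ ≤ x) : (μ {ω | X ω ≤ x}).toReal = 1 - (δ / x) ^ α := by
  have hset : {ω | X ω ≤ x} = {ω | x < X ω}ᶜ := by
    ext ω; simp [not_lt]
  have hm : MeasurableSet {ω | x < X ω} := hX measurableSet_Ioi
  rw [hset, measure_compl hm (measure_ne_top μ _), measure_univ,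
    ENNReal.toReal_sub_of_le (prob_le_one.trans_eq (by simp)) (by simp),
    ENNReal.toReal_one, htail x hx]

lemma pareto_quantile (μ : Measure Ω) [IsProbabilityMeasure μ]
    (X : Ω → ℝ) (hX : Measurable X) (α δ : ℝ) (ha : 0 < α) (hd : 0 < δ)
    (htail : ∀ x : ℝ, δ ≤ x → (μ {ω | x < X ω}).toReal = (δ / x) ^ α)
    (hlow : ∀ x : ℝ, x < δ → μ {ω | X ω ≤ x} = 0)
    (p : ℝ) (hp0 : 0 < p) (hp1 : p < 1) :
    quantile μ X p = δ * (1 - p) ^ (-(1/α)) := by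
  set q : ℝ := δ * (1 - p) ^ (-(1/α)) with hq
  have h1p : 0 < 1 - p := by linarith
  have hexp : (1:ℝ) ≤ (1 - p) ^ (-(1/α)) :=
    Real.one_le_rpow_of_pos_of_le_one_of_nonpos h1p (by linarith)
      (neg_nonpos_of_nonneg (by positivity))
  have hqδ : δ ≤ q := le_mul_of_one_le_right hd.le hexp
  have hq0 : 0 < q := lt_of_lt_of_le hd hqδ
  have hdq : δ / q = (1 - p) ^ (1/α) := by
    rw [hq, Real.rpow_neg h1p.le]
    field_simp
  have hFq : (δ / q) ^ α = 1 - p := by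
    rw [hdq, ← Real.rpow_mul h1p.le, one_div_mul_cancel ha.ne', Real.rpow_one]
  have hmem : q ∈ {x : ℝ | p ≤ (μ {ω | X ω ≤ x}).toReal} := by
    rw [Set.mem_setOf_eq, pareto_cdf μ X hX α δ htail q hqδ, hFq]
    linarith
  have hlb : ∀ x ∈ {x : ℝ | p ≤ (μ {ω | X ω ≤ x}).toReal}, q ≤ x := by
    intro x hx
    by_contra hxq
    push_neg at hxq
    rw [Set.mem_setOf_eq] at hx
    rcases lt_or_ge x δ with hxd | hxd
    · rw [hlow x hxd] at hx
      simp at hx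
      linarith
    · rw [pareto_cdf μ X hX α δ htail x hxd] at hx
      have hlt : (δ / q) ^ α < (δ / x) ^ α := by
        apply Real.rpow_lt_rpow (by positivity) _ ha
        have hx0 : 0 < x := lt_of_lt_of_le hd hxd
        exact div_lt_div_of_pos_left hd hx0 hxq
      rw [hFq] at hlt
      linarith
  exact le_antisymm (csInf_le ⟨q, hlb⟩ hmem) (le_csInf ⟨q, hmem⟩ hlb)

theorem pareto_peR (μ : Measure Ω) [IsProbabilityMeasure μ]
    (X : Ω → ℝ) (hX : Measurable X) (α δ : ℝ) (ha : 0 < α) (hd : 0 < δ)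
    (htail : ∀ x : ℝ, δ ≤ x → (μ {ω | x < X ω}).toReal = (δ / x) ^ α)
    (hlow : ∀ x : ℝ, x < δ → μ {ω | X ω ≤ x} = 0) :
    peR μ X = 3 / (4 * (4 * (3:ℝ) ^ (1/α) - 3) ^ α) := by
  set a : ℝ := (3:ℝ) ^ (1/α) with haa
  set b : ℝ := (4:ℝ) ^ (1/α) with hbb
  have ha1 : (1:ℝ) ≤ a := Real.one_le_rpow (by norm_num) (by positivity)
  have hab : a ≤ b := Real.rpow_le_rpow (by norm_num) (by norm_num) (by positivity)
  have hb1 : (1:ℝ) ≤ b := ha1.trans hab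
  have ha0 : 0 < a := by linarith
  have hb0 : 0 < b := by linarith
  have haα : a ^ α = 3 := by
    rw [haa, ← Real.rpow_mul (by norm_num), one_div_mul_cancel ha.ne', Real.rpow_one]
  have hbα : b ^ α = 4 := by
    rw [hbb, ← Real.rpow_mul (by norm_num), one_div_mul_cancel ha.ne', Real.rpow_one]
  have hQ3 : Q3 μ X = δ * b := by
    rw [Q3, pareto_quantile μ X hX α δ ha hd htail hlow (3/4) (by norm_num) (by norm_num)]
    congr 1
    rw [show (1:ℝ) - 3/4 = 4⁻¹ by norm_num, ← Real.rpow_neg_one (4:ℝ),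
      ← Real.rpow_mul (by norm_num)]
    ring_nf
    rw [hbb, one_div]
  have hQ1 : Q1 μ X = δ * (b / a) := by
    rw [Q1, pareto_quantile μ X hX α δ ha hd htail hlow (1/4) (by norm_num) (by norm_num)]
    congr 1
    rw [show (1:ℝ) - 1/4 = 3/4 by norm_num, Real.rpow_neg (by norm_num),
      Real.div_rpow (by norm_num) (by norm_num), ← haa, ← hbb, inv_div]
  set t : ℝ := Q3 μ X + 3 * IQR μ X with ht
  have hta : t = δ * (b * (4 * a - 3) / a) := by
    rw [ht, IQR, hQ3, hQ1]; field_simp; ring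
  have h4a3 : (1:ℝ) ≤ 4 * a - 3 := by linarith
  have htδ : δ ≤ t := by
    rw [hta]
    have : (1:ℝ) ≤ b * (4 * a - 3) / a := by
      rw [le_div_iff₀ ha0]
      nlinarith
    nlinarith
  have ht0 : 0 < t := lt_of_lt_of_le hd htδ
  have key : peR μ X = (δ / t) ^ α := by
    rw [peR, ← ht, htail t htδ]
  rw [key, hta]
  have hdt : δ / (δ * (b * (4 * a - 3) / a)) = a / (b * (4 * a - 3)) := by
    field_simp
  rw [hdt, Real.div_rpow ha0.le (by positivity), Real.mul_rpow hb0.le (by linarith), haα, hbα]
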